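/- Let α be a complex number with Re(α) > −1/2 and let u_0 : ℂ[x] → ℂ be any linear functional satisfying u_0(P_k(·;α)) = δ_{0,k} for all k ≥ 0. Then the moments of u_0 are u_0(xⁿ) = ((α)_n)² / (2ⁿ (α+1/2)_n) for every n ≥ 0. -/

import Mathlib

open Polynomial

/-- The polynomials `p_n(x; α)` defined recursively by
`p_0 = 1`, `p_{n+1} = x² p_n'' − x(2x − 1 − 2α) p_n' − ((2α+1)x − α²) p_n`. -/
noncomputable def pseq (α : ℂ) : ℕ → ℂ[X]
  | 0 => 1
  | n + 1 =>
      X ^ 2 * derivative (derivative (pseq α n))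
        - X * (2 * X - C (1 + 2 * α)) * derivative (pseq α n)
        - (C (2 * α + 1) * X - C (α ^ 2)) * pseq α n

/-- The monic normalization `P_n(x;α) = p_n(x;α) / ((−2)ⁿ (α+1/2)_n)`. -/
noncomputable def Pmonic (α : ℂ) (n : ℕ) : ℂ[X] :=
  ((-2 : ℂ) ^ n * (ascPochhammer ℂ n).eval (α + 1 / 2))⁻¹ • pseq α n

noncomputable def Lop (α : ℂ) : ℂ[X] →ₗ[ℂ] ℂ[X] where
  toFun q := X * derivative (X * derivative q) + C (2 * α) * (X * derivative q)
      - C 2 * (X * (X * derivative q)) - C (2 * α + 1) * (X * q) + C (α ^ 2) * q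
  map_add' p q := by
    simp only [derivative_add, mul_add]
    ring
  map_smul' c q := by
    simp only [smul_eq_C_mul, derivative_mul, derivative_C, derivative_X, RingHom.id_apply,
      zero_mul, one_mul, zero_add, mul_add]
    ring

lemma pseq_succ (α : ℂ) (n : ℕ) : pseq α (n + 1) = Lop α (pseq α n) := by
  show _ = (X : ℂ[X]) * derivative (X * derivative _) + _ - _ - _ + _
  rw [pseq]
  simp only [derivative_mul, derivative_X, one_mul, C_add, C_mul, C_1, map_ofNat]
  ring

lemma coeff_Lop (α : ℂ) (q : ℂ[X]) (k : ℕ) :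
    (Lop α q).coeff (k + 1)
      = (((k : ℂ) + 1) + α) ^ 2 * q.coeff (k + 1)
        - (2 * k + 2 * α + 1) * q.coeff k := by
  show (X * derivative (X * derivative q) + C (2 * α) * (X * derivative q)
      - C 2 * (X * (X * derivative q)) - C (2 * α + 1) * (X * q) + C (α ^ 2) * q).coeff (k + 1) = _
  have h0 : ∀ m : ℕ, (X * derivative q).coeff m = (m : ℂ) * q.coeff m := by
    intro m
    cases m with
    | zero => simp
    | succ m => rw [coeff_X_mul, coeff_derivative]; push_cast; ring
  simp only [coeff_add, coeff_sub, coeff_C_mul, coeff_X_mul, coeff_derivative, h0]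
  push_cast
  ring

lemma coeff_pseq_zero (α : ℂ) : ∀ n k : ℕ, n < k → (pseq α n).coeff k = 0 := by
  intro n
  induction n with
  | zero => intro k hk; rw [pseq]; simp only [coeff_one, ite_eq_right_iff]; omega
  | succ n ih =>
      intro k hk
      obtain ⟨m, rfl⟩ : ∃ m, k = m + 1 := ⟨k - 1, by omega⟩
      rw [pseq_succ, coeff_Lop, ih (m + 1) (by omega), ih m (by omega)]
      ring

lemma coeff_pseq_self (α : ℂ) (n : ℕ) :
    (pseq α n).coeff n = (-2) ^ n * (ascPochhammer ℂ n).eval (α + 1 / 2) := by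
  induction n with
  | zero => rw [pseq]; simp
  | succ n ih =>
      rw [pseq_succ, coeff_Lop, coeff_pseq_zero α n (n + 1) (by omega), ih,
        ascPochhammer_succ_right]
      simp only [eval_mul, eval_add, eval_X, eval_natCast]
      ring

lemma poch_ne (α : ℂ) (hα : -(1 / 2 : ℝ) < α.re) (n : ℕ) :
    (ascPochhammer ℂ n).eval (α + 1 / 2) ≠ 0 := by
  have key : ∀ k : ℕ, α + 1 / 2 + (k : ℂ) ≠ 0 := by
    intro k h
    have := congrArg Complex.re h
    simp only [Complex.add_re, Complex.natCast_re, Complex.zero_re, Complex.div_re,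
      Complex.one_re, Complex.one_im, Complex.re_ofNat, Complex.im_ofNat, Complex.normSq_ofNat] at this
    have hk : (0 : ℝ) ≤ (k : ℝ) := Nat.cast_nonneg k
    norm_num at this
    linarith
  induction n with
  | zero => simp
  | succ n ih =>
      rw [ascPochhammer_succ_right, eval_mul, eval_add, eval_X, eval_natCast]
      exact mul_ne_zero ih (key n)

lemma lead_ne (α : ℂ) (hα : -(1 / 2 : ℝ) < α.re) (n : ℕ) :
    ((-2 : ℂ) ^ n * (ascPochhammer ℂ n).eval (α + 1 / 2)) ≠ 0 :=
  mul_ne_zero (pow_ne_zero _ (by norm_num)) (poch_ne α hα n)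

lemma pseq_span (α : ℂ) (hα : -(1 / 2 : ℝ) < α.re) (p : ℂ[X]) :
    p ∈ Submodule.span ℂ (Set.range (pseq α)) := by
  suffices h : ∀ N : ℕ, ∀ p : ℂ[X], p.natDegree ≤ N →
      p ∈ Submodule.span ℂ (Set.range (pseq α)) from h p.natDegree p le_rfl
  intro N
  induction N with
  | zero =>
      intro p hp
      have : p = (p.coeff 0) • pseq α 0 := by
        conv_lhs => rw [Polynomial.eq_C_of_natDegree_le_zero hp]
        rw [pseq, smul_eq_C_mul, mul_one]
      rw [this]
      exact Submodule.smul_mem _ _ (Submodule.subset_span ⟨0, rfl⟩)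
  | succ N ih =>
      intro p hp
      set c : ℂ := p.coeff (N + 1) / ((-2 : ℂ) ^ (N + 1) * (ascPochhammer ℂ (N + 1)).eval (α + 1 / 2)) with hc
      have hq : (p - c • pseq α (N + 1)).natDegree ≤ N := by
        rw [natDegree_le_iff_coeff_eq_zero]
        intro M hM
        rcases eq_or_lt_of_le (Nat.succ_le_of_lt hM) with h | h
        · rw [coeff_sub, coeff_smul, ← h, coeff_pseq_self, hc, smul_eq_mul,
            div_mul_cancel₀ _ (lead_ne α hα (N + 1)), sub_self]
        · rw [coeff_sub, coeff_smul, coeff_eq_zero_of_natDegree_lt (lt_of_le_of_lt hp h),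
            coeff_pseq_zero α (N + 1) M h, smul_zero, sub_zero]
      have := Submodule.add_mem _ (ih _ hq)
        (Submodule.smul_mem _ c (Submodule.subset_span ⟨N + 1, rfl⟩))
      simpa using this

lemma shift_ne (α : ℂ) (hα : -(1 / 2 : ℝ) < α.re) (k : ℕ) : α + 1 / 2 + (k : ℂ) ≠ 0 := by
  intro h
  have := congrArg Complex.re h
  simp only [Complex.add_re, Complex.natCast_re, Complex.zero_re, Complex.div_re,
    Complex.one_re, Complex.one_im, Complex.re_ofNat, Complex.im_ofNat, Complex.normSq_ofNat] at this
  have hk : (0 : ℝ) ≤ (k : ℝ) := Nat.cast_nonneg k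
  norm_num at this
  linarith

lemma D1_X_pow (k : ℕ) : X * derivative (X ^ k : ℂ[X]) = C (k : ℂ) * X ^ k := by
  cases k with
  | zero => simp
  | succ m => rw [derivative_X_pow, Nat.add_sub_cancel]; ring

lemma LopX (α : ℂ) (k : ℕ) :
    Lop α (X ^ k : ℂ[X]) = C (((k : ℂ) + α) ^ 2) * X ^ k
      - C (2 * k + 2 * α + 1) * X ^ (k + 1) := by
  show X * derivative (X * derivative (X ^ k : ℂ[X])) + C (2 * α) * (X * derivative (X ^ k : ℂ[X]))
      - C 2 * (X * (X * derivative (X ^ k : ℂ[X]))) - C (2 * α + 1) * (X * X ^ k)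
      + C (α ^ 2) * X ^ k = _
  rw [D1_X_pow, derivative_C_mul, mul_left_comm X, D1_X_pow]
  simp only [C_add, C_mul, C_pow, C_1, map_ofNat, C_eq_natCast]
  ring

theorem stmt14 (α : ℂ) (hα : -(1 / 2 : ℝ) < α.re) (u0 : ℂ[X] →ₗ[ℂ] ℂ)
    (hu0 : ∀ k : ℕ, u0 (Pmonic α k) = if k = 0 then 1 else 0) (n : ℕ) :
    u0 (X ^ n)
      = ((ascPochhammer ℂ n).eval α) ^ 2 / (2 ^ n * (ascPochhammer ℂ n).eval (α + 1 / 2)) := by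
  have hp : ∀ k : ℕ, u0 (pseq α k) = if k = 0 then 1 else 0 := by
    intro k
    have h1 : u0 (pseq α k)
        = ((-2 : ℂ) ^ k * (ascPochhammer ℂ k).eval (α + 1 / 2)) * (if k = 0 then 1 else 0) := by
      rw [← hu0 k, Pmonic, map_smul, smul_eq_mul, ← mul_assoc,
        mul_inv_cancel₀ (lead_ne α hα k), one_mul]
    rw [h1]
    cases k with
    | zero => simp
    | succ m => simp
  have hL : ∀ q : ℂ[X], u0 (Lop α q) = 0 := by
    intro q
    refine Submodule.span_induction ?_ ?_ ?_ ?_ (pseq_span α hα q)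
    · rintro x ⟨k, rfl⟩
      rw [← pseq_succ, hp]
      simp
    · simp
    · intro x y _ _ hx hy
      rw [map_add, map_add, hx, hy, add_zero]
    · intro a x _ hx
      rw [map_smul, map_smul, hx, smul_zero]
  have hrec : ∀ k : ℕ, (2 * (k : ℂ) + 2 * α + 1) * u0 (X ^ (k + 1))
      = ((k : ℂ) + α) ^ 2 * u0 (X ^ k) := by
    intro k
    have := hL (X ^ k)
    rw [LopX, ← smul_eq_C_mul, ← smul_eq_C_mul, map_sub, map_smul, map_smul,
      smul_eq_mul, smul_eq_mul, sub_eq_zero] at this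
    linear_combination this.symm
  induction n with
  | zero =>
      have : (X ^ 0 : ℂ[X]) = pseq α 0 := by rw [pseq, pow_zero]
      rw [this, hp]
      simp
  | succ n ih =>
      have hd : (2 * (n : ℂ) + 2 * α + 1) ≠ 0 := by
        have := shift_ne α hα n
        intro h
        apply this
        linear_combination h / 2
      have h1 : u0 (X ^ (n + 1)) = ((n : ℂ) + α) ^ 2 * u0 (X ^ n) / (2 * n + 2 * α + 1) := by
        rw [eq_div_iff hd]
        linear_combination hrec n
      rw [h1, ih, ascPochhammer_succ_right]
      simp only [eval_mul, eval_add, eval_X, eval_natCast]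
      have hpo := poch_ne α hα n
      have hs := shift_ne α hα n
      have h2 : (2 : ℂ) ^ n ≠ 0 := pow_ne_zero _ two_ne_zero
      have hden1 : (2 : ℂ) ^ n * eval (α + 1 / 2) (ascPochhammer ℂ n) * (2 * n + 2 * α + 1) ≠ 0 :=
        mul_ne_zero (mul_ne_zero h2 hpo) hd
      have hden2 : (2 : ℂ) ^ (n + 1) * (eval (α + 1 / 2) (ascPochhammer ℂ n) * (α + 1 / 2 + n)) ≠ 0 :=
        mul_ne_zero (pow_ne_zero _ two_ne_zero) (mul_ne_zero hpo hs)
      rw [mul_div_assoc', div_div, div_eq_div_iff hden1 hden2]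
      ring
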